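/- Let F : A → B be a lens and let J̄₁, J̄₂ : B → C be the cokernel pair of its get functor U F in Cat (the pushout of U F along itself). Then J̄₁ and J̄₂ are cosieves, and the unique lenses J₁ and J₂ whose get functors are J̄₁ and J̄₂ satisfy J₁ ∘ F = J₂ ∘ F in the category Lens. -/

import Mathlib

universe u

open CategoryTheory CategoryTheory.Limits

namespace LensPaper

section OutDefs

variable {A : Type*} [Category A] {B : Type*} [Category B] {C : Type*} [Category C]

/-- The "out-set" of an object: the collection of all morphisms out of `X`,
bundled with their targets. -/
def Out (X : A) : Type _ := Σ Y : A, X ⟶ Y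

/-- The identity element of an out-set. -/
def Out.id (X : A) : Out X := ⟨X, 𝟙 X⟩

/-- Composition of a morphism out of `X` with a morphism out of its target. -/
def Out.comp {X : A} (u : Out X) (v : Out u.1) : Out X := ⟨v.1, u.2 ≫ v.2⟩

/-- Transport of out-sets along an equality of objects. -/
def Out.cast {X Y : A} (h : X = Y) (u : Out X) : Out Y := ⟨u.1, eqToHom h.symm ≫ u.2⟩

@[simp] theorem Out.cast_rfl {X : A} (u : Out X) : Out.cast rfl u = u := by
  cases u; simp [Out.cast]; rfl

theorem Out.cast_cast {X Y Z : A} (h₁ : X = Y) (h₂ : Y = Z) (u : Out X) :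
    Out.cast h₂ (Out.cast h₁ u) = Out.cast (h₁.trans h₂) u := by
  subst h₁; subst h₂; simp

/-- The action of a functor on out-sets. -/
def mapOut (F : A ⥤ B) {X : A} (u : Out X) : Out (F.obj X) := ⟨F.obj u.1, F.map u.2⟩

theorem mapOut_cast (F : A ⥤ B) {X Y : A} (h : X = Y) (u : Out X) :
    mapOut F (Out.cast h u) = Out.cast (congrArg F.obj h) (mapOut F u) := by
  subst h; simp

/-- The set of all morphisms of a category, bundled with their endpoints. -/
def Mor (A : Type*) [Category A] : Type _ := Σ (X Y : A), X ⟶ Y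

/-- The action of a functor on morphisms, as a function on bundled morphisms. -/
def mapMor (F : A ⥤ B) : Mor A → Mor B := fun m => ⟨F.obj m.1, F.obj m.2.1, F.map m.2.2⟩

/-- The set of composable pairs of morphisms of a category. -/
def CompPair (A : Type*) [Category A] : Type _ := Σ (X Y Z : A), (X ⟶ Y) × (Y ⟶ Z)

/-- The action of a functor on composable pairs. -/
def mapCompPair (F : A ⥤ B) : CompPair A → CompPair B :=
  fun p => ⟨F.obj p.1, F.obj p.2.1, F.obj p.2.2.1, (F.map p.2.2.2.1, F.map p.2.2.2.2)⟩

/-- A functor is a discrete opfibration if every morphism out of `F.obj X`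
has a unique lift to a morphism out of `X`. -/
def IsDiscreteOpfibration (F : A ⥤ B) : Prop :=
  ∀ (X : A) (u : Out (F.obj X)), ∃! v : Out X, mapOut F v = u

/-- A cosieve is an injective-on-objects discrete opfibration. -/
def IsCosieve (F : A ⥤ B) : Prop :=
  IsDiscreteOpfibration F ∧ Function.Injective F.obj

end OutDefs

/-- An (asymmetric delta) lens: a get functor together with put functions
satisfying PutGet, PutId and PutPut. -/
structure DLens (A : Type*) (B : Type*) [Category A] [Category B] where
  get : A ⥤ B
  put : ∀ (X : A), Out (get.obj X) → Out X
  putGet : ∀ (X : A) (u : Out (get.obj X)), mapOut get (put X u) = u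
  putId : ∀ (X : A), put X (Out.id (get.obj X)) = Out.id X
  putPut : ∀ (X : A) (u : Out (get.obj X)) (v : Out u.1) (h : u.1 = get.obj (put X u).1),
      put X (u.comp v) = (put X u).comp (put (put X u).1 (Out.cast h v))

namespace DLens

variable {A : Type*} [Category A] {B : Type*} [Category B] {C : Type*} [Category C]

theorem put_cast (F : DLens A B) {X₁ X₂ : A} (e : X₁ = X₂) (u : Out (F.get.obj X₁)) :
    Out.cast e (F.put X₁ u) = F.put X₂ (Out.cast (congrArg F.get.obj e) u) := by
  subst e; simp

/-- The identity lens. -/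
def id (A : Type*) [Category A] : DLens A A where
  get := Functor.id A
  put X u := u
  putGet X u := rfl
  putId X := rfl
  putPut X u v h := by
    have hv : Out.cast h v = v := Out.cast_rfl v
    rw [hv]

/-- Composition of lenses. -/
def comp (F : DLens A B) (G : DLens B C) : DLens A C where
  get := F.get ⋙ G.get
  put X u := F.put X (G.put (F.get.obj X) u)
  putGet X u := by
    show mapOut G.get (mapOut F.get (F.put X (G.put (F.get.obj X) u))) = u
    rw [F.putGet, G.putGet]
  putId X := by
    show F.put X (G.put (F.get.obj X) (Out.id (G.get.obj (F.get.obj X)))) = Out.id X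
    rw [G.putId, F.putId]
  putPut X u v h := by
    have h₁ : u.1 = G.get.obj (G.put (F.get.obj X) u).1 :=
      (congrArg Sigma.fst (G.putGet (F.get.obj X) u)).symm
    show F.put X (G.put (F.get.obj X) (u.comp v)) = _
    rw [G.putPut (F.get.obj X) u v h₁]
    have h₂ : (G.put (F.get.obj X) u).1 =
        F.get.obj (F.put X (G.put (F.get.obj X) u)).1 :=
      (congrArg Sigma.fst (F.putGet X (G.put (F.get.obj X) u))).symm
    rw [F.putPut X (G.put (F.get.obj X) u) _ h₂]
    rw [put_cast G h₂, Out.cast_cast]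

end DLens

/-- The category of small categories and (asymmetric delta) lenses. -/
def LensCat : Type (u + 1) := Cat.{u, u}

/-- Regard a small category as an object of the category of lenses. -/
def LensCat.of (C : Cat.{u, u}) : LensCat.{u} := C

/-- The underlying small category of an object of the category of lenses. -/
def LensCat.toCat (A : LensCat.{u}) : Cat.{u, u} := A

instance : Category.{u} LensCat.{u} where
  Hom A B := DLens A.toCat B.toCat
  id A := DLens.id A.toCat
  comp F G := F.comp G
  id_comp F := rfl
  comp_id F := rfl
  assoc F G H := rfl

/-- The get functor of a lens, i.e. a morphism of `LensCat` regarded as a `DLens`. -/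
def LensCat.get {A B : LensCat.{u}} (F : A ⟶ B) : A.toCat ⟶ B.toCat := (DLens.get F).toCatHom

/-- The identity-on-objects forgetful functor from the category of lenses to the
category of small categories and functors, sending a lens to its get functor. -/
def lensForget : LensCat.{u} ⥤ Cat.{u, u} where
  obj A := A.toCat
  map F := (DLens.get F).toCatHom
  map_id A := rfl
  map_comp F G := rfl


section AuxGeneral

variable {A : Type*} [Category A] {B : Type*} [Category B] {C : Type*} [Category C]
  {P : Type*} [Category P]

theorem mapOut_id {X : A} (u : Out X) : mapOut (Functor.id A) u = u := rfl

theorem mapOut_mapOut (F : A ⥤ B) (G : B ⥤ C) {X : A} (u : Out X) :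
    mapOut G (mapOut F u) = mapOut (F ⋙ G) u := rfl

theorem mapOut_eq_cast {F G : A ⥤ B} (h : F = G) {X : A} (u : Out X) :
    mapOut G u = Out.cast (Functor.congr_obj h X) (mapOut F u) := by
  subst h; simp

theorem Out.cast_irrel {X : A} (h : X = X) (u : Out X) : Out.cast h u = u :=
  Out.cast_rfl u

theorem Out.cast_proof {X Y : A} (h h' : X = Y) (u : Out X) :
    Out.cast h u = Out.cast h' u := rfl

theorem mapOut_comp' (F : A ⥤ B) {X : A} (u : Out X) (v : Out u.1) :
    mapOut F (u.comp v) = (mapOut F u).comp (mapOut F v) := by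
  dsimp [mapOut, Out.comp]
  exact congrArg (Sigma.mk _) (F.map_comp _ _)

theorem Out.comp_congr {X : A} {u u' : Out X} (h : u = u') (v : Out u.1) :
    u.comp v = u'.comp (Out.cast (congrArg Sigma.fst h) v) := by
  subst h; rw [Out.cast_irrel]

theorem Out.cast_inj {X Y : A} (h : X = Y) {u v : Out X}
    (huv : Out.cast h u = Out.cast h v) : u = v := by
  have : ∀ w : Out X, w = Out.cast h.symm (Out.cast h w) := fun w => by
    rw [Out.cast_cast, Out.cast_irrel]
  rw [this u, this v, huv]

theorem DLens.ext2 {M N : DLens A B} (hg : M.get = N.get)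
    (hp : ∀ (X : A) (u : Out (M.get.obj X)),
      M.put X u = N.put X (Out.cast (Functor.congr_obj hg X) u)) : M = N := by
  obtain ⟨g1, p1, _, _, _⟩ := M
  obtain ⟨g2, p2, _, _, _⟩ := N
  dsimp at hg
  subst hg
  have hpp : p1 = p2 := by
    funext X u
    exact (hp X u).trans (congrArg (p2 X) (Out.cast_irrel _ u))
  subst hpp
  rfl

/-- A discrete opfibration carries a lens structure. -/
noncomputable def dlensOfDOF (G : B ⥤ C) (h : IsDiscreteOpfibration G) : DLens B C where
  get := G
  put X u := (h X u).exists.choose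
  putGet X u := (h X u).exists.choose_spec
  putId X := (h X (Out.id _)).unique ((h X _).exists.choose_spec)
    (by dsimp [mapOut, Out.id]; exact congrArg (Sigma.mk _) (G.map_id X))
  putPut X u v hf := by
    refine (h X (u.comp v)).unique ((h X (u.comp v)).exists.choose_spec) ?_
    rw [mapOut_comp']
    refine (Out.comp_congr ((h X u).exists.choose_spec) _).trans ?_
    refine (congrArg (fun w => u.comp
      (Out.cast (congrArg Sigma.fst (h X u).exists.choose_spec) w))
      ((h _ _).exists.choose_spec)).trans ?_
    exact congrArg (Out.comp u) ((Out.cast_cast _ _ v).trans (Out.cast_irrel _ v))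

theorem existsUnique_dlens (G : B ⥤ C) (h : IsDiscreteOpfibration G) :
    ∃! L : DLens B C, L.get = G := by
  refine ⟨dlensOfDOF G h, rfl, fun L hL => ?_⟩
  refine DLens.ext2 (M := L) (N := dlensOfDOF G h) hL ?_
  intro X u
  refine (h X _).unique ?_ ((h X _).exists.choose_spec)
  rw [mapOut_eq_cast hL (L.put X u), L.putGet X u]
  rfl

theorem mapOut_injective {E : B ⥤ C} {E' : C ⥤ B} (h1 : E ⋙ E' = Functor.id B) {X : B} :
    Function.Injective (fun u : Out X => mapOut E u) := by
  intro u v huv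
  have hu := mapOut_eq_cast h1 u
  have hv := mapOut_eq_cast h1 v
  rw [mapOut_id] at hu hv
  rw [hu, hv, ← mapOut_mapOut, ← mapOut_mapOut]
  dsimp only at huv
  rw [huv]

theorem isCosieve_of_comp_iso (G : B ⥤ C) (E : C ⥤ P) (E' : P ⥤ C)
    (h1 : E ⋙ E' = Functor.id C) (K : B ⥤ P) (hc : G ⋙ E = K) (hK : IsCosieve K) :
    IsCosieve G := by
  have hKw : ∀ (X : B) (w : Out X),
      mapOut K w = Out.cast (Functor.congr_obj hc X) (mapOut E (mapOut G w)) := fun X w => by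
    rw [mapOut_mapOut]; exact mapOut_eq_cast hc w
  constructor
  · intro X u
    obtain ⟨v, hv, hvuniq⟩ := hK.1 X (Out.cast (Functor.congr_obj hc X) (mapOut E u))
    refine ⟨v, ?_, ?_⟩
    · exact mapOut_injective h1
        (Out.cast_inj (Functor.congr_obj hc X) ((hKw X v).symm.trans hv))
    · intro w hw
      exact hvuniq w ((hKw X w).trans
        (congrArg (fun z => Out.cast (Functor.congr_obj hc X) (mapOut E z)) hw))
  · intro X Y hXY
    refine hK.2 ?_
    rw [← Functor.congr_obj hc X, ← Functor.congr_obj hc Y]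
    dsimp only [Functor.comp_obj]
    rw [hXY]

end AuxGeneral

section Model

universe v

variable {𝒜 : Type v} [Category.{v} 𝒜] {ℬ : Type v} [Category.{v} ℬ]

/-- The set of objects in the image of the get functor of a lens. -/
def InS (F : DLens 𝒜 ℬ) (b : ℬ) : Prop := ∃ a, F.get.obj a = b

theorem InS.closed {F : DLens 𝒜 ℬ} {b b' : ℬ} (hb : InS F b) (g : b ⟶ b') : InS F b' := by
  obtain ⟨a, rfl⟩ := hb
  exact ⟨(F.put a ⟨b', g⟩).1, congrArg Sigma.fst (F.putGet a ⟨b', g⟩)⟩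

/-- Objects of the explicit cokernel pair of the get functor of a lens:
a copy of `ℬ` (tag `false`) plus a copy of the complement of the image (tag `true`). -/
structure PObj (F : DLens 𝒜 ℬ) : Type v where
  base : ℬ
  tag : Bool
  htag : tag = true → ¬ InS F base

variable {F : DLens 𝒜 ℬ}

theorem PObj.ext' {X Y : PObj F} (h1 : X.base = Y.base) (h2 : X.tag = Y.tag) : X = Y := by
  cases X; cases Y
  dsimp at h1 h2
  subst h1; subst h2
  rfl

instance PObj.cat : Category.{v} (PObj F) where
  Hom X Y := {g : X.base ⟶ Y.base // Y.tag = true ↔ (X.tag = true ∧ ¬ InS F Y.base)}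
  id X := ⟨𝟙 X.base, ⟨fun h => ⟨h, X.htag h⟩, fun h => h.1⟩⟩
  comp {X Y Z} f g := ⟨f.1 ≫ g.1, by
    constructor
    · intro hZ
      exact ⟨(f.2.mp (g.2.mp hZ).1).1, (g.2.mp hZ).2⟩
    · rintro ⟨hX, hZ⟩
      exact g.2.mpr ⟨f.2.mpr ⟨hX, fun hY => hZ (hY.closed g.1)⟩, hZ⟩⟩
  id_comp f := Subtype.ext (Category.id_comp f.1)
  comp_id f := Subtype.ext (Category.comp_id f.1)
  assoc f g h := Subtype.ext (Category.assoc f.1 g.1 h.1)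

theorem PObj.eqToHom_base {X Y : PObj F} (h : X = Y) :
    (eqToHom h).1 = eqToHom (congrArg PObj.base h) := by
  subst h; rfl

theorem PObj.hom_val_id (X : PObj F) : (𝟙 X : X ⟶ X).1 = 𝟙 X.base := rfl

theorem PObj.hom_val_comp {X Y Z : PObj F} (f : X ⟶ Y) (g : Y ⟶ Z) :
    (f ≫ g).1 = f.1 ≫ g.1 := rfl

/-- Heterogeneous equality of underlying morphisms from equality of targets. -/
theorem PObj.val_heq {X Y Y' : PObj F} (h : Y = Y') (f : X ⟶ Y) (f' : X ⟶ Y')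
    (hf : HEq f f') : HEq f.1 f'.1 := by
  subst h; rw [eq_of_heq hf]

/-- First injection of the cokernel pair. -/
def K1 (F : DLens 𝒜 ℬ) : ℬ ⥤ PObj F where
  obj b := ⟨b, false, by simp⟩
  map g := ⟨g, by simp⟩
  map_id _ := rfl
  map_comp _ _ := rfl

open Classical in
/-- Second injection of the cokernel pair. -/
noncomputable def K2 (F : DLens 𝒜 ℬ) : ℬ ⥤ PObj F where
  obj b := ⟨b, if InS F b then false else true, by
    intro h
    by_cases hb : InS F b
    · simp [hb] at h
    · exact hb⟩
  map {b b'} g := ⟨g, by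
    by_cases hb : InS F b
    · have hb' : InS F b' := hb.closed g
      simp [hb, hb']
    · by_cases hb' : InS F b' <;> simp [hb, hb']⟩
  map_id _ := rfl
  map_comp _ _ := rfl

theorem K2_obj_eq_of_ins {b : ℬ} (hb : InS F b) : (K2 F).obj b = (K1 F).obj b :=
  PObj.ext' rfl (by simp [K2, K1, hb])

theorem K2_obj_eq_of_not_ins {b : ℬ} (hb : ¬ InS F b) :
    (K2 F).obj b = ⟨b, true, fun _ => hb⟩ :=
  PObj.ext' rfl (by simp [K2, hb])

/-- The square commutes: the two injections agree on the image of the lens. -/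
theorem sqK (F : DLens 𝒜 ℬ) : F.get ⋙ K1 F = F.get ⋙ K2 F := by
  have hobj : ∀ a, (F.get ⋙ K1 F).obj a = (F.get ⋙ K2 F).obj a :=
    fun a => (K2_obj_eq_of_ins ⟨a, rfl⟩).symm
  refine CategoryTheory.Functor.ext hobj (fun X Y f => ?_)
  refine Subtype.ext ?_
  rw [PObj.hom_val_comp, PObj.hom_val_comp, PObj.eqToHom_base, PObj.eqToHom_base]
  change F.get.map f = eqToHom _ ≫ F.get.map f ≫ eqToHom _
  simp
  exact (Category.id_comp _).symm

end Model

section ModelCosieve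

universe v

variable {𝒜 : Type v} [Category.{v} 𝒜] {ℬ : Type v} [Category.{v} ℬ] {F : DLens 𝒜 ℬ}

theorem out_ext_P {Z : PObj F} (u v : Out Z) (h1 : u.1 = v.1) (h2 : HEq u.2.1 v.2.1) :
    u = v := by
  obtain ⟨Y1, g1⟩ := u
  obtain ⟨Y2, g2⟩ := v
  dsimp at h1
  subst h1
  dsimp at h2
  exact congrArg (Sigma.mk Y1) (Subtype.ext (eq_of_heq h2))

theorem isCosieve_K1 : IsCosieve (K1 F) := by
  constructor
  · intro b u
    obtain ⟨⟨yb, yt, hy⟩, f⟩ := u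
    have hyt : yt = false := by
      cases yt
      · rfl
      · exact absurd (f.2.mp rfl).1 (by simp [K1])
    subst hyt
    refine ⟨⟨yb, f.1⟩, rfl, ?_⟩
    rintro ⟨zb, g⟩ hz
    dsimp [mapOut] at hz
    injection hz with h1 h2
    have hzb : zb = yb := congrArg PObj.base h1
    subst hzb
    have : (K1 F).map g = f := eq_of_heq h2
    exact congrArg (Sigma.mk zb) (congrArg Subtype.val this)
  · intro b b' h
    exact congrArg PObj.base h

theorem isCosieve_K2 : IsCosieve (K2 F) := by
  constructor
  · intro b u
    obtain ⟨Y, f⟩ := u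
    have hY : (K2 F).obj Y.base = Y := by
      cases hyt : Y.tag
      · have hby : InS F Y.base := by
          by_contra hni
          have h2 : ¬ (((K2 F).obj b).tag = true ∧ ¬ InS F Y.base) := by
            rw [← f.2, hyt]; simp
          have htb : ((K2 F).obj b).tag ≠ true := fun ht => h2 ⟨ht, hni⟩
          have hbIn : InS F b := by
            by_contra hbn
            exact htb (by simp [K2, hbn])
          exact hni (hbIn.closed f.1)
        exact (K2_obj_eq_of_ins hby).trans (PObj.ext' rfl hyt.symm)
      · exact (K2_obj_eq_of_not_ins (Y.htag hyt)).trans (PObj.ext' rfl hyt.symm)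
    refine ⟨⟨Y.base, f.1⟩, ?_, ?_⟩
    · exact out_ext_P _ _ hY HEq.rfl
    · rintro ⟨zb, g⟩ hz
      dsimp [mapOut] at hz
      injection hz with h1 h2
      have hzb : zb = Y.base := by
        have := congrArg PObj.base h1
        simpa [K2] using this
      subst hzb
      have hval : HEq ((K2 F).map g).1 f.1 := PObj.val_heq h1 _ _ h2
      exact congrArg (Sigma.mk Y.base) (eq_of_heq hval)
  · intro b b' h
    have := congrArg PObj.base h
    simpa [K2] using this

/-- Lifts along the two injections of a morphism out of an image object agree. -/
theorem K_lift_unique {b : ℬ} (hb : InS F b) (w1 w2 : Out b)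
    (hobj : (K2 F).obj b = (K1 F).obj b)
    (h : mapOut (K1 F) w1 = Out.cast hobj (mapOut (K2 F) w2)) : w1 = w2 := by
  obtain ⟨y1, g1⟩ := w1
  obtain ⟨y2, g2⟩ := w2
  dsimp [mapOut, Out.cast] at h
  injection h with h1 h2
  have hy : y1 = y2 := congrArg PObj.base h1
  subst hy
  have hval : HEq ((K1 F).map g1).1 (eqToHom hobj.symm ≫ (K2 F).map g2).1 :=
    PObj.val_heq h1 _ _ h2
  rw [PObj.hom_val_comp, PObj.eqToHom_base] at hval
  have hg : g1 = eqToHom (congrArg PObj.base hobj.symm) ≫ g2 := eq_of_heq hval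
  refine congrArg (Sigma.mk y1) ?_
  rw [hg]
  have : congrArg PObj.base hobj.symm = rfl := rfl
  exact (congrArg (· ≫ g2) (eqToHom_refl b rfl)).trans (Category.id_comp g2)

end ModelCosieve

section Mediating

universe v

variable {𝒜 : Type v} [Category.{v} 𝒜] {ℬ : Type v} [Category.{v} ℬ]
  {𝒟 : Type*} [Category 𝒟]
variable {F : DLens 𝒜 ℬ} (G1 G2 : ℬ ⥤ 𝒟)

theorem objeq (hc : F.get ⋙ G1 = F.get ⋙ G2) {b : ℬ} (hb : InS F b) :
    G2.obj b = G1.obj b := by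
  obtain ⟨a, rfl⟩ := hb
  exact (Functor.congr_obj hc a).symm

/-- Naturality of the identification of the two copies on the image of the lens:
this is where the lens structure is used. -/
theorem keyNat (hc : F.get ⋙ G1 = F.get ⋙ G2) {b b' : ℬ} (hb : InS F b) (g : b ⟶ b') :
    G2.map g ≫ eqToHom (objeq G1 G2 hc (hb.closed g)) =
      eqToHom (objeq G1 G2 hc hb) ≫ G1.map g := by
  obtain ⟨a, rfl⟩ := hb
  have main : ∀ (w : Out a) (p : G2.obj (F.get.obj w.1) = G1.obj (F.get.obj w.1))
      (q : G2.obj (F.get.obj a) = G1.obj (F.get.obj a)),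
      G2.map (F.get.map w.2) ≫ eqToHom p = eqToHom q ≫ G1.map (F.get.map w.2) := by
    intro w p q
    have h := Functor.congr_hom hc w.2
    dsimp at h
    rw [h]
    simp
  have H : ∀ (u : Out (F.get.obj a)) (p : G2.obj u.1 = G1.obj u.1)
      (q : G2.obj (F.get.obj a) = G1.obj (F.get.obj a)),
      G2.map u.2 ≫ eqToHom p = eqToHom q ≫ G1.map u.2 := by
    intro u
    rw [← F.putGet a u]
    exact main (F.put a u)
  exact H ⟨b', g⟩ _ _

theorem ins_of_tf {bY : ℬ} (hv : (false = true) ↔ ((true = true) ∧ ¬ InS F bY)) :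
    InS F bY := by
  by_contra h
  exact absurd (hv.mpr ⟨rfl, h⟩) (by simp)

/-- The underlying map of the mediating functor out of the explicit pushout. -/
def MedMapAux (hc : F.get ⋙ G1 = F.get ⋙ G2) :
    ∀ (bX bY : ℬ) (tX tY : Bool) (g : bX ⟶ bY)
    (hv : tY = true ↔ (tX = true ∧ ¬ InS F bY)),
    (bif tX then G2.obj bX else G1.obj bX) ⟶ (bif tY then G2.obj bY else G1.obj bY)
  | _, _, false, false, g, _ => G1.map g
  | _, _, true, true, g, _ => G2.map g
  | _, _, true, false, g, hv => G2.map g ≫ eqToHom (objeq G1 G2 hc (ins_of_tf hv))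
  | _, _, false, true, _, hv => absurd (hv.mp rfl).1 (by simp)

/-- The mediating functor out of the explicit pushout. -/
def Med (hc : F.get ⋙ G1 = F.get ⋙ G2) : PObj F ⥤ 𝒟 where
  obj X := bif X.tag then G2.obj X.base else G1.obj X.base
  map {X Y} f := MedMapAux G1 G2 hc X.base Y.base X.tag Y.tag f.1 f.2
  map_id X := by
    obtain ⟨b, t, ht⟩ := X
    cases t <;> simp [MedMapAux, PObj.hom_val_id]
  map_comp {X Y Z} f g := by
    obtain ⟨bX, tX, hX⟩ := X
    obtain ⟨bY, tY, hY⟩ := Y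
    obtain ⟨bZ, tZ, hZ⟩ := Z
    obtain ⟨f, hf⟩ := f
    obtain ⟨g, hg⟩ := g
    cases tX <;> cases tY <;> cases tZ
    · simp [MedMapAux, PObj.hom_val_comp]
    · exact absurd (hg.mp rfl).1 (by simp)
    · exact absurd (hf.mp rfl).1 (by simp)
    · exact absurd (hf.mp rfl).1 (by simp)
    · -- true, false, false
      simp only [MedMapAux, PObj.hom_val_comp]
      rw [Functor.map_comp, Category.assoc, keyNat G1 G2 hc (ins_of_tf hf) g]
      simp
    · exact absurd (hg.mp rfl).1 (by simp)
    · simp [MedMapAux, PObj.hom_val_comp]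
    · simp [MedMapAux, PObj.hom_val_comp]

end Mediating

section MediatingFac

universe v

variable {𝒜 : Type v} [Category.{v} 𝒜] {ℬ : Type v} [Category.{v} ℬ]
  {𝒟 : Type*} [Category 𝒟]
variable {F : DLens 𝒜 ℬ} (G1 G2 : ℬ ⥤ 𝒟) (hc : F.get ⋙ G1 = F.get ⋙ G2)

theorem Med_obj_f {X : PObj F} (hX : X.tag = false) :
    (Med G1 G2 hc).obj X = G1.obj X.base := by
  obtain ⟨b, t, ht⟩ := X
  dsimp at hX
  subst hX
  rfl

theorem Med_obj_t {X : PObj F} (hX : X.tag = true) :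
    (Med G1 G2 hc).obj X = G2.obj X.base := by
  obtain ⟨b, t, ht⟩ := X
  dsimp at hX
  subst hX
  rfl

theorem Med_map_tt {X Y : PObj F} (hX : X.tag = true) (hY : Y.tag = true) (f : X ⟶ Y) :
    (Med G1 G2 hc).map f =
      eqToHom (Med_obj_t G1 G2 hc hX) ≫ G2.map f.1 ≫ eqToHom (Med_obj_t G1 G2 hc hY).symm := by
  obtain ⟨bX, tX, hX'⟩ := X
  obtain ⟨bY, tY, hY'⟩ := Y
  dsimp at hX hY
  subst hX; subst hY
  simp [Med, MedMapAux]
  exact (Category.id_comp _).symm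

theorem Med_map_tf {X Y : PObj F} (hX : X.tag = true) (hY : Y.tag = false)
    (hbY : InS F Y.base) (f : X ⟶ Y) :
    (Med G1 G2 hc).map f =
      eqToHom (Med_obj_t G1 G2 hc hX) ≫ G2.map f.1 ≫
        eqToHom ((objeq G1 G2 hc hbY).trans (Med_obj_f G1 G2 hc hY).symm) := by
  obtain ⟨bX, tX, hX'⟩ := X
  obtain ⟨bY, tY, hY'⟩ := Y
  dsimp at hX hY
  subst hX; subst hY
  simp [Med, MedMapAux]
  exact (Category.id_comp _).symm

theorem K1_Med : K1 F ⋙ Med G1 G2 hc = G1 := by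
  refine CategoryTheory.Functor.ext (fun b => rfl) (fun X Y f => ?_)
  simp [Med, K1, MedMapAux]
  exact (Category.id_comp _).symm

theorem K2_Med : K2 F ⋙ Med G1 G2 hc = G2 := by
  have hobj : ∀ b, (K2 F ⋙ Med G1 G2 hc).obj b = G2.obj b := by
    intro b
    by_cases hb : InS F b
    · exact (congrArg (Med G1 G2 hc).obj (K2_obj_eq_of_ins hb)).trans (objeq G1 G2 hc hb).symm
    · exact congrArg (Med G1 G2 hc).obj (K2_obj_eq_of_not_ins hb)
  refine CategoryTheory.Functor.ext hobj (fun b b' f => ?_)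
  by_cases hb : InS F b
  · have hb' : InS F b' := hb.closed f
    have hX2 : (K2 F).obj b = (K1 F).obj b := K2_obj_eq_of_ins hb
    have hY2 : (K2 F).obj b' = (K1 F).obj b' := K2_obj_eq_of_ins hb'
    have hf2 : (K2 F).map f = eqToHom hX2 ≫ (K1 F).map f ≫ eqToHom hY2.symm := by
      refine Subtype.ext ?_
      rw [PObj.hom_val_comp, PObj.hom_val_comp, PObj.eqToHom_base, PObj.eqToHom_base]
      dsimp only [K1, K2]
      exact (by simp : f = eqToHom (rfl : b = b) ≫ f ≫ eqToHom (rfl : b' = b'))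
    show (Med G1 G2 hc).map ((K2 F).map f) = _
    rw [hf2, Functor.map_comp, Functor.map_comp, eqToHom_map, eqToHom_map]
    have hK1 : (Med G1 G2 hc).map ((K1 F).map f) = G1.map f := by
      simp [Med, K1, MedMapAux]
    rw [hK1]
    have hkey : G1.map f = eqToHom (objeq G1 G2 hc hb).symm ≫ G2.map f ≫
        eqToHom (objeq G1 G2 hc (hb.closed f)) := by
      rw [keyNat G1 G2 hc hb f, eqToHom_trans_assoc]
      simp
    rw [hkey]
    simp [eqToHom_trans]
    have aux : ∀ {W X Y Z V U : 𝒟} (p : W = X) (q : X = Y) (g : Y ⟶ Z) (r : Z = V) (s : V = U),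
        eqToHom p ≫ (eqToHom q ≫ g ≫ eqToHom r) ≫ eqToHom s =
          eqToHom (p.trans q) ≫ g ≫ eqToHom (r.trans s) := by
      intros; simp
    exact aux _ _ _ _ _
  · by_cases hb' : InS F b'
    · -- true -> false
      have hX2 : (K2 F).obj b = ⟨b, true, fun _ => hb⟩ := K2_obj_eq_of_not_ins hb
      have hY2 : (K2 F).obj b' = (K1 F).obj b' := K2_obj_eq_of_ins hb'
      show (Med G1 G2 hc).map ((K2 F).map f) = _
      have htags : ((K2 F).obj b).tag = true := by simp [K2, hb]
      have htags' : ((K2 F).obj b').tag = false := by simp [K2, hb']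
      rw [Med_map_tf G1 G2 hc htags htags' hb' ((K2 F).map f)]
      rfl
    · -- true -> true
      have htags : ((K2 F).obj b).tag = true := by simp [K2, hb]
      have htags' : ((K2 F).obj b').tag = true := by simp [K2, hb']
      show (Med G1 G2 hc).map ((K2 F).map f) = _
      rw [Med_map_tt G1 G2 hc htags htags' ((K2 F).map f)]
      rfl

end MediatingFac

section MediatingUniq

universe v

variable {𝒜 : Type v} [Category.{v} 𝒜] {ℬ : Type v} [Category.{v} ℬ]
  {𝒟 : Type*} [Category 𝒟]
variable {F : DLens 𝒜 ℬ} (G1 G2 : ℬ ⥤ 𝒟) (hc : F.get ⋙ G1 = F.get ⋙ G2)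

theorem Med_unique (N : PObj F ⥤ 𝒟) (hn1 : K1 F ⋙ N = G1) (hn2 : K2 F ⋙ N = G2) :
    N = Med G1 G2 hc := by
  have hobj : ∀ X : PObj F, N.obj X = (Med G1 G2 hc).obj X := by
    rintro ⟨b, t, ht⟩
    cases t
    · exact Functor.congr_obj hn1 b
    · have hX2 : (K2 F).obj b = ⟨b, true, ht⟩ := K2_obj_eq_of_not_ins (ht rfl)
      exact (congrArg N.obj hX2).symm.trans (Functor.congr_obj hn2 b)
  refine CategoryTheory.Functor.ext hobj (fun X Y f => ?_)
  obtain ⟨bX, tX, hX⟩ := X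
  obtain ⟨bY, tY, hY⟩ := Y
  cases tX
  · cases tY
    · -- false, false : f is K1.map f.1 definitionally
      exact Functor.congr_hom hn1 (f.1 : bX ⟶ bY)
    · exact absurd (f.2.mp rfl).1 (by simp)
  · -- tX = true : f factors through K2
    have hX2 : (K2 F).obj bX = ⟨bX, true, hX⟩ := K2_obj_eq_of_not_ins (hX rfl)
    have hY2 : (K2 F).obj bY = ⟨bY, tY, hY⟩ := by
      cases tY
      · exact K2_obj_eq_of_ins (ins_of_tf f.2)
      · exact K2_obj_eq_of_not_ins (hY rfl)
    have hf2 : f = eqToHom hX2.symm ≫ (K2 F).map (f.1 : bX ⟶ bY) ≫ eqToHom hY2 := by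
      refine Subtype.ext ?_
      rw [PObj.hom_val_comp, PObj.hom_val_comp, PObj.eqToHom_base, PObj.eqToHom_base]
      dsimp only [K2]
      simp
      exact (by simp : f.1 = eqToHom (rfl : bX = bX) ≫ f.1)
    rw [hf2, Functor.map_comp, Functor.map_comp, Functor.map_comp, Functor.map_comp,
      eqToHom_map, eqToHom_map, eqToHom_map, eqToHom_map]
    have h2 : N.map ((K2 F).map (f.1 : bX ⟶ bY)) = eqToHom (Functor.congr_obj hn2 bX) ≫
        G2.map f.1 ≫ eqToHom (Functor.congr_obj hn2 bY).symm :=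
      Functor.congr_hom hn2 f.1
    have h3 : (Med G1 G2 hc).map ((K2 F).map (f.1 : bX ⟶ bY)) =
        eqToHom (Functor.congr_obj (K2_Med G1 G2 hc) bX) ≫
        G2.map f.1 ≫ eqToHom (Functor.congr_obj (K2_Med G1 G2 hc) bY).symm :=
      Functor.congr_hom (K2_Med G1 G2 hc) f.1
    rw [h2, h3]
    simp [eqToHom_trans, eqToHom_trans_assoc]

end MediatingUniq

section LiftUnique

universe v

variable {𝒜 : Type v} [Category.{v} 𝒜] {ℬ : Type v} [Category.{v} ℬ]

theorem lift_unique_abstract {F : DLens 𝒜 ℬ} {𝒞 : Type*} [Category 𝒞]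
    (J1 J2 : ℬ ⥤ 𝒞) (E : 𝒞 ⥤ PObj F)
    (hc1 : J1 ⋙ E = K1 F) (hc2 : J2 ⋙ E = K2 F)
    {b : ℬ} (hb : InS F b) (w1 w2 : Out b)
    (hobj : J2.obj b = J1.obj b)
    (hw : mapOut J1 w1 = Out.cast hobj (mapOut J2 w2)) : w1 = w2 := by
  refine K_lift_unique hb w1 w2 (K2_obj_eq_of_ins hb) ?_
  have e1 : mapOut (K1 F) w1 =
      Out.cast (Functor.congr_obj hc1 b) (mapOut E (mapOut J1 w1)) := by
    rw [mapOut_mapOut]; exact mapOut_eq_cast hc1 w1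
  have e2 : mapOut (K2 F) w2 =
      Out.cast (Functor.congr_obj hc2 b) (mapOut E (mapOut J2 w2)) := by
    rw [mapOut_mapOut]; exact mapOut_eq_cast hc2 w2
  rw [e1, e2, hw, mapOut_cast, Out.cast_cast, Out.cast_cast]

end LiftUnique
end LensPaper
open CategoryTheory CategoryTheory.Limits LensPaper

/-- Let `F : A ⟶ B` be a lens and let `J1, J2 : B ⟶ C` be the
cokernel pair of its get functor in `Cat` (the pushout of `U F` along itself).
Then `J1` and `J2` are cosieves, each carries a unique lens structure, and the
resulting lenses `L1`, `L2` satisfy `L1 ∘ F = L2 ∘ F` in `Lens`. -/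
theorem cokernel_pair_of_get_is_cosieve (A B : LensCat.{u}) (F : A ⟶ B)
    (C : Cat.{u, u}) (J1 J2 : B.toCat ⟶ C)
    (hpo : IsPushout (lensForget.map F) (lensForget.map F) J1 J2) :
    IsCosieve J1.toFunctor ∧ IsCosieve J2.toFunctor ∧
    (∃! L : B ⟶ LensCat.of C, DLens.get L = J1.toFunctor) ∧
    (∃! L : B ⟶ LensCat.of C, DLens.get L = J2.toFunctor) ∧
    (∀ (L1 L2 : B ⟶ LensCat.of C), DLens.get L1 = J1.toFunctor → DLens.get L2 = J2.toFunctor →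
      F ≫ L1 = F ≫ L2) := by
  classical
  -- the explicit model cocone
  let K1c : B.toCat ⟶ Cat.of (PObj F) := (K1 F).toCatHom
  let K2c : B.toCat ⟶ Cat.of (PObj F) := (K2 F).toCatHom
  have wCat : lensForget.map F ≫ K1c = lensForget.map F ≫ K2c := by
    apply Cat.ext
    show F.get ⋙ K1 F = F.get ⋙ K2 F
    exact sqK F
  have tm : IsColimit (PushoutCocone.mk K1c K2c wCat) :=
    PushoutCocone.IsColimit.mk wCat
      (fun s => (Med (F := F) s.inl.toFunctor s.inr.toFunctor (congrArg Cat.Hom.toFunctor s.condition)).toCatHom)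
      (fun s => Cat.ext (K1_Med (F := F) s.inl.toFunctor s.inr.toFunctor (congrArg Cat.Hom.toFunctor s.condition)))
      (fun s => Cat.ext (K2_Med (F := F) s.inl.toFunctor s.inr.toFunctor (congrArg Cat.Hom.toFunctor s.condition)))
      (fun s m hm1 hm2 => Cat.ext (Med_unique (F := F) s.inl.toFunctor s.inr.toFunctor
        (congrArg Cat.Hom.toFunctor s.condition) m.toFunctor
        (congrArg Cat.Hom.toFunctor hm1) (congrArg Cat.Hom.toFunctor hm2)))
  have t : IsColimit hpo.cocone := hpo.isColimit
  let e : C ≅ Cat.of (PObj F) := t.coconePointUniqueUpToIso tm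
  have hcomm1 : J1.toFunctor ⋙ e.hom.toFunctor = K1 F :=
    congrArg Cat.Hom.toFunctor (t.comp_coconePointUniqueUpToIso_hom tm WalkingSpan.left)
  have hcomm2 : J2.toFunctor ⋙ e.hom.toFunctor = K2 F :=
    congrArg Cat.Hom.toFunctor (t.comp_coconePointUniqueUpToIso_hom tm WalkingSpan.right)
  have hinv1 : e.hom.toFunctor ⋙ e.inv.toFunctor = Functor.id C :=
    congrArg Cat.Hom.toFunctor e.hom_inv_id
  have c1 : IsCosieve J1.toFunctor :=
    isCosieve_of_comp_iso J1.toFunctor e.hom.toFunctor e.inv.toFunctor hinv1 (K1 F) hcomm1 isCosieve_K1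
  have c2 : IsCosieve J2.toFunctor :=
    isCosieve_of_comp_iso J2.toFunctor e.hom.toFunctor e.inv.toFunctor hinv1 (K2 F) hcomm2 isCosieve_K2
  refine ⟨c1, c2, existsUnique_dlens J1.toFunctor c1.1, existsUnique_dlens J2.toFunctor c2.1, ?_⟩
  intro L1 L2 hg1 hg2
  have hg : (F ≫ L1).get = (F ≫ L2).get := by
    show F.get ⋙ L1.get = F.get ⋙ L2.get
    rw [hg1, hg2]
    exact congrArg Cat.Hom.toFunctor hpo.w
  refine DLens.ext2 hg ?_
  intro X u
  refine congrArg (F.put X) ?_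
  refine lift_unique_abstract (DLens.get L1) (DLens.get L2) e.hom.toFunctor
    (by rw [hg1]; exact hcomm1) (by rw [hg2]; exact hcomm2)
    ⟨X, rfl⟩ _ _ (Functor.congr_obj hg X).symm ?_
  erw [L1.putGet, L2.putGet, Out.cast_cast, Out.cast_irrel]
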